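/- arXiv:1307.4036 — 2 statements merged into one kernel-verified Lean document; each statement's English description precedes it below -/
import Mathlib

section
/- For all i, j ≥ 1, the extended weighted kneading determinant Δ_{ij}(z) = det(I₂ − z M_{ij}(z)) satisfies Δ_{ij}(z) = Δ(z)·(1 − C_j^{i-1} z^{i-j+1}) − C_1^{i-1} · Σ_{n≥0} a_{j+n-1} C_j^{j+n-1} z^{n+i+1}, where the monomial C_j^{i-1} z^{i-j+1} is interpreted as 0 when i < j−1 (its coefficient C_j^{i-1} then vanishes, so no negative powers of z occur). -/
/-- Addition of a natural number to a positive natural number,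
yielding a positive natural number. -/
def pnatAdd (j : ℕ+) (k : ℕ) : ℕ+ :=
  ⟨(j : ℕ) + k, Nat.lt_of_lt_of_le j.pos (Nat.le_add_right _ _)⟩

/-- The weighted kneading determinant `Δ(z) = 1 − Σ_{n≥0} a_n C_1^n z^{n+1}`
of the Leslie difference equation, where `C_1^n = ∏_{k=1}^n b_k`. -/
noncomputable def kneadingDet (a : ℕ → ℂ) (b : ℕ+ → ℂ) : PowerSeries ℂ :=
  1 - PowerSeries.X
        * PowerSeries.mk (fun n => a n * ∏ k ∈ Finset.range n, b (pnatAdd 1 k))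

/-- The extended weighted kneading matrix `M_{ij}(z)`: the `2 × 2` matrix over
`ℂ[[z]]` with rows `(Σ (R X^n e_1) z^n, Σ (R X^n e_j) z^n)` and
`(Σ (X^n e_1)_i z^n, Σ (X^n e_j)_i z^n)`. -/
noncomputable def kneadingMatrix
    (X : (ℕ+ →₀ ℂ) →ₗ[ℂ] (ℕ+ →₀ ℂ)) (R : (ℕ+ →₀ ℂ) →ₗ[ℂ] ℂ)
    (i j : ℕ+) : Matrix (Fin 2) (Fin 2) (PowerSeries ℂ) :=
  !![PowerSeries.mk (fun n => R ((X ^ n) (Finsupp.single (1 : ℕ+) 1))),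
     PowerSeries.mk (fun n => R ((X ^ n) (Finsupp.single j 1)));
     PowerSeries.mk (fun n => ((X ^ n) (Finsupp.single (1 : ℕ+) 1)) i),
     PowerSeries.mk (fun n => ((X ^ n) (Finsupp.single j 1)) i)]

/-- The extended weighted kneading determinant `Δ_{ij}(z) = det(I₂ − z M_{ij}(z))`. -/
noncomputable def extKneadingDet
    (X : (ℕ+ →₀ ℂ) →ₗ[ℂ] (ℕ+ →₀ ℂ)) (R : (ℕ+ →₀ ℂ) →ₗ[ℂ] ℂ)
    (i j : ℕ+) : PowerSeries ℂ :=
  Matrix.det (1 - (PowerSeries.X : PowerSeries ℂ) • kneadingMatrix X R i j)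

lemma pnatAdd_zero (j : ℕ+) : pnatAdd j 0 = j := Subtype.ext (Nat.add_zero _)

lemma pnatAdd_succ (j : ℕ+) (n : ℕ) : pnatAdd j n + 1 = pnatAdd j (n + 1) := rfl

lemma Xpow_single (b : ℕ+ → ℂ) (X : (ℕ+ →₀ ℂ) →ₗ[ℂ] (ℕ+ →₀ ℂ))
    (hX : ∀ j : ℕ+, X (Finsupp.single j 1) = b j • Finsupp.single (j + 1) 1)
    (j : ℕ+) (n : ℕ) :
    (X ^ n) (Finsupp.single j 1)
      = (∏ k ∈ Finset.range n, b (pnatAdd j k)) • Finsupp.single (pnatAdd j n) 1 := by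
  induction n with
  | zero => simp [pnatAdd_zero]
  | succ n ih =>
    rw [pow_succ', Module.End.mul_apply, ih, map_smul, hX, pnatAdd_succ, smul_smul,
      Finset.prod_range_succ]

lemma monomial_eq (n : ℕ) (c : ℂ) :
    PowerSeries.monomial n c = PowerSeries.C c * PowerSeries.X ^ n := by
  ext m
  rw [PowerSeries.coeff_monomial, PowerSeries.coeff_C_mul_X_pow]

section
variable (a : ℕ → ℂ) (b : ℕ+ → ℂ)
    (X : (ℕ+ →₀ ℂ) →ₗ[ℂ] (ℕ+ →₀ ℂ))
    (hX : ∀ j : ℕ+, X (Finsupp.single j 1) = b j • Finsupp.single (j + 1) 1)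
    (R : (ℕ+ →₀ ℂ) →ₗ[ℂ] ℂ)
    (hR : ∀ j : ℕ+, R (Finsupp.single j 1) = a ((j : ℕ) - 1))

include hX hR in
lemma row_R (j : ℕ+) :
    PowerSeries.mk (fun n => R ((X ^ n) (Finsupp.single j 1)))
      = PowerSeries.mk (fun n => a ((j : ℕ) + n - 1)
          * ∏ k ∈ Finset.range n, b (pnatAdd j k)) := by
  ext m
  simp only [PowerSeries.coeff_mk, Xpow_single b X hX, map_smul, hR, smul_eq_mul]
  rw [mul_comm]
  rfl

include hX in
lemma row_ev (i j : ℕ+) :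
    PowerSeries.mk (fun n => ((X ^ n) (Finsupp.single j 1)) i)
      = if (j : ℕ) ≤ (i : ℕ) then
          PowerSeries.C (∏ k ∈ Finset.range ((i : ℕ) - (j : ℕ)), b (pnatAdd j k))
            * PowerSeries.X ^ ((i : ℕ) - (j : ℕ))
        else 0 := by
  rw [← monomial_eq]
  ext m
  simp only [PowerSeries.coeff_mk, Xpow_single b X hX, Finsupp.smul_apply,
    Finsupp.single_apply, smul_eq_mul]
  have hc : (pnatAdd j m = i) ↔ ((j : ℕ) + m = (i : ℕ)) := by
    constructor
    · intro h; exact congrArg Subtype.val h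
    · intro h; exact Subtype.ext h
  by_cases hji : (j : ℕ) ≤ (i : ℕ)
  · rw [if_pos hji, PowerSeries.coeff_monomial]
    by_cases hm : m = (i : ℕ) - (j : ℕ)
    · subst hm
      rw [if_pos rfl, if_pos (hc.mpr (by omega)), mul_one]
    · rw [if_neg hm, if_neg (fun h => hm (by have := hc.mp h; omega)), mul_zero]
  · rw [if_neg hji, if_neg (fun h => hji (by have := hc.mp h; omega)), mul_zero,
      map_zero]
end

/-- For all `i, j ≥ 1`,
`Δ_{ij}(z) = Δ(z)·(1 − C_j^{i-1} z^{i-j+1}) − C_1^{i-1} · Σ_{n≥0} a_{j+n-1} C_j^{j+n-1} z^{n+i+1}`,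
where the monomial `C_j^{i-1} z^{i-j+1}` is interpreted as `0` when `i < j`
(its coefficient `C_j^{i-1}` vanishes there, so no negative powers of `z` occur). -/
theorem extended_kneading_determinant_formula
    (a : ℕ → ℂ) (b : ℕ+ → ℂ)
    (X : (ℕ+ →₀ ℂ) →ₗ[ℂ] (ℕ+ →₀ ℂ))
    (hX : ∀ j : ℕ+, X (Finsupp.single j 1) = b j • Finsupp.single (j + 1) 1)
    (R : (ℕ+ →₀ ℂ) →ₗ[ℂ] ℂ)
    (hR : ∀ j : ℕ+, R (Finsupp.single j 1) = a ((j : ℕ) - 1))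
    (i j : ℕ+) :
    extKneadingDet X R i j
      = kneadingDet a b
          * (1 - (if (j : ℕ) ≤ (i : ℕ) then
              (PowerSeries.monomial ((i : ℕ) - (j : ℕ) + 1))
                (∏ k ∈ Finset.range ((i : ℕ) - (j : ℕ)), b (pnatAdd j k))
            else 0))
        - PowerSeries.C (∏ k ∈ Finset.range ((i : ℕ) - 1), b (pnatAdd 1 k))
            * ((PowerSeries.X : PowerSeries ℂ) ^ ((i : ℕ) + 1)
                * PowerSeries.mk
                    (fun n => a ((j : ℕ) + n - 1)
                      * ∏ k ∈ Finset.range n, b (pnatAdd j k))) := by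
  have hF1 : PowerSeries.mk (fun n => R ((X ^ n) (Finsupp.single (1 : ℕ+) 1)))
      = PowerSeries.mk (fun n => a n * ∏ k ∈ Finset.range n, b (pnatAdd 1 k)) := by
    rw [row_R a b X hX R hR 1]
    ext m
    simp only [PowerSeries.coeff_mk]
    congr 1
    simp
  have hFj := row_R a b X hX R hR j
  have hG1 : PowerSeries.mk (fun n => ((X ^ n) (Finsupp.single (1 : ℕ+) 1)) i)
      = PowerSeries.C (∏ k ∈ Finset.range ((i : ℕ) - 1), b (pnatAdd 1 k))
          * PowerSeries.X ^ ((i : ℕ) - 1) := by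
    rw [row_ev b X hX i 1, if_pos (show ((1:ℕ+):ℕ) ≤ (i:ℕ) from i.pos)]
    norm_num
  have hGj := row_ev b X hX i j
  have hi2 : (PowerSeries.X : PowerSeries ℂ) ^ ((i:ℕ)+1)
      = PowerSeries.X ^ 2 * PowerSeries.X ^ ((i:ℕ)-1) := by
    rw [← pow_add]
    congr 1
    have := i.pos
    omega
  have h01 : (1 : Matrix (Fin 2) (Fin 2) (PowerSeries ℂ)) 0 1 = 0 :=
    Matrix.one_apply_ne (by decide)
  have h10 : (1 : Matrix (Fin 2) (Fin 2) (PowerSeries ℂ)) 1 0 = 0 :=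
    Matrix.one_apply_ne (by decide)
  unfold extKneadingDet kneadingMatrix
  rw [Matrix.det_fin_two]
  simp only [Matrix.sub_apply, Matrix.smul_apply, Matrix.one_apply_eq, h01, h10,
    Matrix.of_apply, Matrix.cons_val', Matrix.cons_val_zero, Matrix.cons_val_one,
    Matrix.head_cons, Matrix.head_fin_const, Matrix.empty_val', Matrix.cons_val_fin_one,
    smul_eq_mul]
  rw [hF1, hFj, hG1, hGj, hi2]
  unfold kneadingDet
  rw [monomial_eq]
  by_cases hji : (j:ℕ) ≤ (i:ℕ)
  · rw [if_pos hji, if_pos hji]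
    ring
  · rw [if_neg hji, if_neg hji]
    ring
end

section
/- Let a, b, χ ∈ ℂ and let L be the infinite Leslie matrix with birth rates a_l = a χ^l and constant transition rates b_j = b. Then for all i, j ≥ 1, Σ_{n≥0} (L^n)_{ij} z^n = h(i−j) · b^{i-j} z^{i-j} + a b^{i-1} χ^{j-1} · Σ_{n≥i} (a + bχ)^{n-i} z^n in ℂ[[z]], where h(k) = 1 if k ≥ 0 and h(k) = 0 otherwise (so the first term is absent when i < j). -/
lemma leslie_entry (a b χ : ℂ)
    (L : (ℕ+ →₀ ℂ) →ₗ[ℂ] (ℕ+ →₀ ℂ))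
    (hL : ∀ j : ℕ+, L (Finsupp.single j 1)
        = (a * χ ^ ((j : ℕ) - 1)) • Finsupp.single (1 : ℕ+) 1
          + b • Finsupp.single (j + 1) 1)
    (n : ℕ) : ∀ (i j : ℕ+),
    ((L ^ n) (Finsupp.single j 1)) i
      = (if (j : ℕ) ≤ (i : ℕ) ∧ n = (i : ℕ) - (j : ℕ) then b ^ ((i:ℕ) - (j:ℕ)) else 0)
        + (if (i : ℕ) ≤ n then
            a * b ^ ((i:ℕ) - 1) * χ ^ ((j:ℕ) - 1) * (a + b * χ) ^ (n - (i:ℕ)) else 0) := by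
  induction n with
  | zero =>
    intro i j
    have hi := i.one_le
    have hj := j.one_le
    have hi' : (1:ℕ) ≤ (i:ℕ) := hi
    have hj' : (1:ℕ) ≤ (j:ℕ) := hj
    have hni : ¬ ((i:ℕ) ≤ 0) := by omega
    simp only [pow_zero, Module.End.one_apply, Finsupp.single_apply, hni, if_false, add_zero]
    by_cases h : j = i
    · subst h
      have hc : ((j:ℕ) ≤ (j:ℕ) ∧ 0 = (j:ℕ) - (j:ℕ)) := ⟨le_refl _, by omega⟩
      rw [if_pos rfl, if_pos hc, Nat.sub_self, pow_zero]
    · have hne : (j:ℕ) ≠ (i:ℕ) := fun hh => h (PNat.coe_inj.mp hh)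
      have hc : ¬ ((j:ℕ) ≤ (i:ℕ) ∧ 0 = (i:ℕ) - (j:ℕ)) := by rintro ⟨h1,h2⟩; omega
      rw [if_neg h, if_neg hc]
  | succ n ih =>
    intro i j
    have step : (L ^ (n+1)) (Finsupp.single j 1)
        = (a * χ ^ ((j : ℕ) - 1)) • ((L ^ n) (Finsupp.single (1:ℕ+) 1))
          + b • ((L ^ n) (Finsupp.single (j + 1) 1)) := by
      rw [pow_succ, Module.End.mul_apply, hL j, map_add, map_smul, map_smul]
    rw [step]
    simp only [Finsupp.add_apply, Finsupp.smul_apply, smul_eq_mul, ih i 1, ih i (j+1)]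
    have hj1 : ((j + 1 : ℕ+) : ℕ) = (j:ℕ) + 1 := by push_cast; ring
    rw [hj1]
    have hi : (1:ℕ) ≤ (i:ℕ) := i.one_le
    have hj : (1:ℕ) ≤ (j:ℕ) := j.one_le
    rw [PNat.one_coe]
    split_ifs with h1 h2 h3 h4 h5 <;>
      first
        | (exfalso; omega)
        | ring1
        | (rw [show n + 1 - (i:ℕ) = 0 from by omega]; ring1)
        | (rw [show (j:ℕ) + 1 - 1 = ((j:ℕ) - 1) + 1 from by omega,
              show n + 1 - (i:ℕ) = (n - (i:ℕ)) + 1 from by omega, pow_succ, pow_succ]; ring1)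
        | (rw [show (i:ℕ) - (j:ℕ) = ((i:ℕ) - ((j:ℕ) + 1)) + 1 from by omega, pow_succ]; ring1)

/-- For the geometric-fertility Leslie model, i.e. the infinite
Leslie matrix `L` with birth rates `a_l = a χ^l` and constant transition rates
`b_j = b`, realized as the endomorphism of `ℕ+ →₀ ℂ` with
`L e_j = a χ^{j-1} e_1 + b e_{j+1}`, one has for all `i, j ≥ 1`:
`Σ_{n≥0} (L^n)_{ij} z^n
   = h(i−j) b^{i-j} z^{i-j} + a b^{i-1} χ^{j-1} Σ_{n≥i} (a+bχ)^{n-i} z^n`,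
where `h` is the discrete Heaviside function (the first term is absent when `i < j`). -/
theorem geometric_leslie_generating_function
    (a b χ : ℂ)
    (L : (ℕ+ →₀ ℂ) →ₗ[ℂ] (ℕ+ →₀ ℂ))
    (hL : ∀ j : ℕ+, L (Finsupp.single j 1)
        = (a * χ ^ ((j : ℕ) - 1)) • Finsupp.single (1 : ℕ+) 1
          + b • Finsupp.single (j + 1) 1)
    (i j : ℕ+) :
    PowerSeries.mk (fun n => ((L ^ n) (Finsupp.single j 1)) i)
      = (if (j : ℕ) ≤ (i : ℕ) then
          (PowerSeries.monomial ((i : ℕ) - (j : ℕ))) (b ^ ((i : ℕ) - (j : ℕ)))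
        else 0)
        + PowerSeries.C (a * b ^ ((i : ℕ) - 1) * χ ^ ((j : ℕ) - 1))
            * PowerSeries.mk
                (fun n => if (i : ℕ) ≤ n then (a + b * χ) ^ (n - (i : ℕ)) else 0) := by
  ext n
  rw [PowerSeries.coeff_mk, leslie_entry a b χ L hL n i j, map_add,
    apply_ite (PowerSeries.coeff n), map_zero, PowerSeries.coeff_monomial,
    PowerSeries.coeff_C_mul, PowerSeries.coeff_mk]
  have hi : (1:ℕ) ≤ (i:ℕ) := i.one_le
  have hj : (1:ℕ) ≤ (j:ℕ) := j.one_le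
  split_ifs <;> first | ring1 | (exfalso; omega)
end
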